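/- Fix an integer k ≥ 1 and φ ∈ (0,π], and for 1 ≤ j ≤ k set λ_{k,j}^{φ,max} = (1 − cos((2j−1)π/(2k+1)))/(1 − cos φ). Then λ_{k,j}^{φ,max} is strictly increasing in j, and for every j with 1 ≤ j ≤ k such that λ_{k,j}^{φ,max} < 1, one has P_k^φ(λ_{k,j}^{φ,max}) = 1. -/

import Mathlib

/-- The success probability `P_k^φ(λ)` of the matched-phase Grover algorithm after
`k` iterations: `P_k^φ(λ) = A·cos((2k+1)δ) + B` where `θ = arcsin √λ`,
`δ = arccos (1 − λ(1 − cos φ))`, `A = (sin²θ/sin²δ)(cos φ − cos δ)` and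
`B = (sin²θ/sin²δ)(1 − cos φ·cos δ)`. -/
noncomputable def grovP (k : ℕ) (φ lam : ℝ) : ℝ :=
  let θ : ℝ := Real.arcsin (Real.sqrt lam)
  let δ : ℝ := Real.arccos (1 - lam * (1 - Real.cos φ))
  let A : ℝ := Real.sin θ ^ 2 / Real.sin δ ^ 2 * (Real.cos φ - Real.cos δ)
  let B : ℝ := Real.sin θ ^ 2 / Real.sin δ ^ 2 * (1 - Real.cos φ * Real.cos δ)
  A * Real.cos ((2 * (k : ℝ) + 1) * δ) + B

/-- `φ_k^min = arccos(1 − (2 − 2cos(π/(2k+1)))/(1 − cos(π/(2k−1))))`. -/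
noncomputable def phiMin (k : ℕ) : ℝ :=
  Real.arccos (1 - (2 - 2 * Real.cos (Real.pi / (2 * (k : ℝ) + 1))) /
    (1 - Real.cos (Real.pi / (2 * (k : ℝ) - 1))))

/-- For k ≥ 1 and φ ∈ (0,π], the points
λ_{k,j}^{φ,max} = (1 − cos((2j−1)π/(2k+1)))/(1 − cos φ), 1 ≤ j ≤ k, are strictly
increasing in j, and whenever λ_{k,j}^{φ,max} < 1 one has P_k^φ(λ_{k,j}^{φ,max}) = 1. -/
theorem local_maximum_points_increasing_and_unit_probability
    (k : ℕ) (hk : 1 ≤ k) (φ : ℝ) (hφ : φ ∈ Set.Ioc 0 Real.pi)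
    (lamMax : ℕ → ℝ)
    (hlamMax : ∀ j : ℕ, lamMax j =
      (1 - Real.cos ((2 * (j : ℝ) - 1) * Real.pi / (2 * (k : ℝ) + 1))) / (1 - Real.cos φ)) :
    (∀ i j : ℕ, 1 ≤ i → i < j → j ≤ k → lamMax i < lamMax j) ∧
    (∀ j : ℕ, 1 ≤ j → j ≤ k → lamMax j < 1 → grovP k φ (lamMax j) = 1) := by

  obtain ⟨hφ0, hφπ⟩ := hφ
  have hπ := Real.pi_pos
  have hcosφ : Real.cos φ < 1 := by
    have := Real.strictAntiOn_cos ⟨le_refl 0, hπ.le⟩ ⟨hφ0.le, hφπ⟩ hφ0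
    simpa using this
  have hden : (0:ℝ) < 1 - Real.cos φ := by linarith
  have hD : (0:ℝ) < 2 * (k : ℝ) + 1 := by positivity
  have hbnd : ∀ j : ℕ, 1 ≤ j → j ≤ k →
      0 < (2 * (j : ℝ) - 1) * Real.pi / (2 * (k : ℝ) + 1) ∧
      (2 * (j : ℝ) - 1) * Real.pi / (2 * (k : ℝ) + 1) < Real.pi := by
    intro j hj hjk
    have hjR : (1:ℝ) ≤ (j:ℝ) := by exact_mod_cast hj
    have hkR : (j:ℝ) ≤ (k:ℝ) := by exact_mod_cast hjk
    constructor
    · apply div_pos _ hD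
      have : (0:ℝ) < 2 * (j:ℝ) - 1 := by linarith
      positivity
    · rw [div_lt_iff₀ hD]
      have : 2 * (j:ℝ) - 1 < 2 * (k:ℝ) + 1 := by linarith
      nlinarith
  constructor
  · intro i j hi hij hjk
    have hi' : i ≤ k := le_trans hij.le hjk
    have hj' : 1 ≤ j := le_trans hi (le_of_lt hij)
    obtain ⟨hi0, hiπ⟩ := hbnd i hi hi'
    obtain ⟨hj0, hjπ⟩ := hbnd j hj' hjk
    rw [hlamMax, hlamMax, div_lt_div_iff₀ hden hden]
    have hij' : (2 * (i:ℝ) - 1) * Real.pi / (2 * (k:ℝ) + 1) <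
        (2 * (j:ℝ) - 1) * Real.pi / (2 * (k:ℝ) + 1) := by
      rw [div_lt_div_iff₀ hD hD]
      have hijR : (i:ℝ) < (j:ℝ) := by exact_mod_cast hij
      nlinarith [mul_pos Real.pi_pos hD]
    have := Real.strictAntiOn_cos ⟨hi0.le, hiπ.le⟩ ⟨hj0.le, hjπ.le⟩ hij'
    nlinarith
  · intro j hj hjk hlt
    set α := (2 * (j : ℝ) - 1) * Real.pi / (2 * (k : ℝ) + 1) with hαdef
    obtain ⟨h0, hπ'⟩ := hbnd j hj hjk
    have hlam : lamMax j = (1 - Real.cos α) / (1 - Real.cos φ) := hlamMax j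
    have hca1 : Real.cos α < 1 := by
      have := Real.strictAntiOn_cos ⟨le_refl 0, hπ.le⟩ ⟨h0.le, hπ'.le⟩ h0
      simpa using this
    have hca2 : -1 < Real.cos α := by
      have := Real.strictAntiOn_cos ⟨h0.le, hπ'.le⟩ ⟨hπ.le, le_refl _⟩ hπ'
      simpa using this
    have hlam0 : 0 ≤ lamMax j := by
      rw [hlam]; apply div_nonneg (by linarith) hden.le
    have harg : 1 - lamMax j * (1 - Real.cos φ) = Real.cos α := by
      rw [hlam]; field_simp; ring
    have hδ : Real.arccos (1 - lamMax j * (1 - Real.cos φ)) = α := by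
      rw [harg, Real.arccos_cos h0.le hπ'.le]
    have hsinθ : Real.sin (Real.arcsin (Real.sqrt (lamMax j))) ^ 2 = lamMax j := by
      rw [Real.sin_arcsin (le_trans (by norm_num) (Real.sqrt_nonneg _)) (Real.sqrt_le_one.mpr hlt.le)]
      exact Real.sq_sqrt hlam0
    have hmul : (2 * (k : ℝ) + 1) * α = (2 * (j : ℝ) - 1) * Real.pi := by
      rw [hαdef]; field_simp
    have hcos : Real.cos ((2 * (k : ℝ) + 1) * α) = -1 := by
      rw [hmul]
      have h2 : (2 * (j : ℝ) - 1) * Real.pi = (j : ℝ) * (2 * Real.pi) - Real.pi := by ring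
      rw [h2, Real.cos_sub, Real.cos_nat_mul_two_pi]
      simp [Real.cos_pi, Real.sin_pi]
    have hsinα : Real.sin α ≠ 0 := (Real.sin_pos_of_pos_of_lt_pi h0 hπ').ne'
    have hexp : grovP k φ (lamMax j) =
        Real.sin (Real.arcsin (Real.sqrt (lamMax j))) ^ 2 /
            Real.sin (Real.arccos (1 - lamMax j * (1 - Real.cos φ))) ^ 2 *
            (Real.cos φ - Real.cos (Real.arccos (1 - lamMax j * (1 - Real.cos φ)))) *
            Real.cos ((2 * (k : ℝ) + 1) *
              Real.arccos (1 - lamMax j * (1 - Real.cos φ))) +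
          Real.sin (Real.arcsin (Real.sqrt (lamMax j))) ^ 2 /
            Real.sin (Real.arccos (1 - lamMax j * (1 - Real.cos φ))) ^ 2 *
            (1 - Real.cos φ * Real.cos (Real.arccos (1 - lamMax j * (1 - Real.cos φ)))) := rfl
    rw [hexp, hδ, hsinθ, hcos, hlam, Real.sin_sq]
    have h1a : (1:ℝ) - Real.cos α ≠ 0 := by linarith
    have h2a : (1:ℝ) + Real.cos α ≠ 0 := by linarith
    have hsq : (1:ℝ) - Real.cos α ^ 2 = (1 - Real.cos α) * (1 + Real.cos α) := by ring
    rw [hsq]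
    field_simp
    ring
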